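/- Every vertex that is odd or unreachable in a bipartite graph G1 (with respect to the Gallai-Edmonds decomposition) is matched in every maximum cardinality matching of G1. -/

import Mathlib

universe u v

/-- A matching assigns to each person at most one item, injectively on items. -/
def IsMatching {α β : Type*} (M : α → Option β) : Prop :=
  ∀ a a' b, M a = some b → M a' = some b → a = a'

/-- A matching using only edges of the bipartite graph `E`. -/
def IsMatchingOn {α β : Type*} (E : α → β → Prop) (M : α → Option β) : Prop :=
  (∀ a b, M a = some b → E a b) ∧ IsMatching M

/-- Number of matched people (= number of edges of the matching). -/
noncomputable def msize {α β : Type*} [Fintype α] (M : α → Option β) : ℕ :=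
  Nat.card {a // (M a).isSome}

/-- A maximum cardinality matching of the bipartite graph `E`. -/
def IsMaxMatchingOn {α β : Type*} [Fintype α] (E : α → β → Prop) (M : α → Option β) : Prop :=
  IsMatchingOn E M ∧ ∀ M', IsMatchingOn E M' → msize M' ≤ msize M

mutual
  /-- A person reachable from an `M`-unmatched vertex by an even-length alternating path
  (such paths start at an unmatched person). -/
  inductive EvenA {α : Type u} {β : Type v} (E : α → β → Prop) (M : α → Option β) : α → Prop
    | base (a : α) : M a = none → EvenA E M a
    | step (a : α) (b : β) : OddB E M b → M a = some b → EvenA E M a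
  /-- An item reachable from an `M`-unmatched vertex by an odd-length alternating path. -/
  inductive OddB {α : Type u} {β : Type v} (E : α → β → Prop) (M : α → Option β) : β → Prop
    | step (a : α) (b : β) : EvenA E M a → E a b → M a ≠ some b → OddB E M b
end

mutual
  /-- An item reachable from an `M`-unmatched vertex by an even-length alternating path
  (such paths start at an unmatched item). -/
  inductive EvenB {α : Type u} {β : Type v} (E : α → β → Prop) (M : α → Option β) : β → Prop
    | base (b : β) : (∀ a, M a ≠ some b) → EvenB E M b
    | step (a : α) (b : β) : OddA E M a → M a = some b → EvenB E M b
  /-- A person reachable from an `M`-unmatched vertex by an odd-length alternating path. -/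
  inductive OddA {α : Type u} {β : Type v} (E : α → β → Prop) (M : α → Option β) : α → Prop
    | step (a : α) (b : β) : EvenB E M b → E a b → M a ≠ some b → OddA E M a
end

/-- An unreachable person: no alternating path from an unmatched vertex reaches it. -/
def UnreachA {α β : Type*} (E : α → β → Prop) (M : α → Option β) (a : α) : Prop :=
  ¬ EvenA E M a ∧ ¬ OddA E M a

/-- An unreachable item: no alternating path from an unmatched vertex reaches it. -/
def UnreachB {α β : Type*} (E : α → β → Prop) (M : α → Option β) (b : β) : Prop :=
  ¬ EvenB E M b ∧ ¬ OddB E M b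

section Aux
variable {α β : Type*} [DecidableEq α]

open Finset in
lemma msize_eq [Fintype α] (M : α → Option β) :
    msize M = (Finset.univ.filter (fun a => (M a).isSome)).card := by
  classical
  rw [msize, Nat.card_eq_fintype_card, Fintype.card_subtype]

lemma msize_update [Fintype α] (M : α → Option β) (a : α) (b : β) (ha : M a = none) :
    msize (fun y => if y = a then some b else M y) = msize M + 1 := by
  classical
  rw [msize_eq, msize_eq]
  have h1 : (Finset.univ.filter (fun y => (if y = a then some b else M y).isSome))
      = insert a (Finset.univ.filter (fun y => (M y).isSome)) := by
    ext y
    by_cases hy : y = a <;> simp [hy, ha]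
  rw [h1, Finset.card_insert_of_notMem (by simp [ha])]

lemma msize_swap [Fintype α] (M : α → Option β) (a x : α) (b : β)
    (ha : M a = none) (hx : M x = some b) :
    msize (fun y => if y = a then some b else if y = x then none else M y) = msize M := by
  classical
  rw [msize_eq, msize_eq]
  have hax : a ≠ x := by intro h; rw [h, hx] at ha; exact absurd ha (by simp)
  have h1 : (Finset.univ.filter (fun y => (if y = a then some b else if y = x then none else M y).isSome))
      = insert a ((Finset.univ.filter (fun y => (M y).isSome)).erase x) := by
    ext y
    by_cases hy : y = a
    · simp [hy, hax]
    · by_cases hyx : y = x <;> simp [hy, hyx, hx]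
  have hxmem : x ∈ Finset.univ.filter (fun y => (M y).isSome) := by simp [hx]
  rw [h1, Finset.card_insert_of_notMem (by simp [ha, hax]), Finset.card_erase_of_mem hxmem]
  have : 1 ≤ (Finset.univ.filter (fun y => (M y).isSome)).card :=
    Finset.card_pos.mpr ⟨x, hxmem⟩
  omega

end Aux

section Fuel
variable {α β : Type*}

/-- Fueled version of `EvenB` (with `OddA` inlined). -/
def EvenBN (E : α → β → Prop) (M : α → Option β) : ℕ → β → Prop
  | 0, _ => False
  | n+1, b => (∀ a, M a ≠ some b) ∨
      ∃ a, (∃ b', EvenBN E M n b' ∧ E a b' ∧ M a ≠ some b') ∧ M a = some b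

/-- Fueled version of `EvenA` (with `OddB` inlined). -/
def EvenAN (E : α → β → Prop) (M : α → Option β) : ℕ → α → Prop
  | 0, _ => False
  | n+1, a => M a = none ∨
      ∃ b, (∃ a', EvenAN E M n a' ∧ E a' b ∧ M a' ≠ some b) ∧ M a = some b

variable {E : α → β → Prop} {M : α → Option β}

lemma EvenBN_mono : ∀ {m n : ℕ}, m ≤ n → ∀ {b}, EvenBN E M m b → EvenBN E M n b := by
  intro m n h
  induction n generalizing m with
  | zero => intro b hb; interval_cases m; exact hb.elim
  | succ n ih =>
    intro b hb
    match m, h with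
    | 0, _ => exact hb.elim
    | m+1, h =>
      rcases hb with h1 | ⟨a, ⟨b', hb', hE, hne⟩, ha⟩
      · exact Or.inl h1
      · exact Or.inr ⟨a, ⟨b', ih (Nat.succ_le_succ_iff.mp h) hb', hE, hne⟩, ha⟩

lemma EvenAN_mono : ∀ {m n : ℕ}, m ≤ n → ∀ {a}, EvenAN E M m a → EvenAN E M n a := by
  intro m n h
  induction n generalizing m with
  | zero => intro a ha; interval_cases m; exact ha.elim
  | succ n ih =>
    intro a ha
    match m, h with
    | 0, _ => exact ha.elim
    | m+1, h =>
      rcases ha with h1 | ⟨b, ⟨a', ha', hE, hne⟩, hb⟩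
      · exact Or.inl h1
      · exact Or.inr ⟨b, ⟨a', ih (Nat.succ_le_succ_iff.mp h) ha', hE, hne⟩, hb⟩

lemma EvenB_toN {b : β} (h : EvenB E M b) : ∃ n, EvenBN E M n b := by
  refine EvenB.rec (motive_1 := fun b _ => ∃ n, EvenBN E M n b)
    (motive_2 := fun a _ => ∃ n, ∃ b', EvenBN E M n b' ∧ E a b' ∧ M a ≠ some b')
    ?_ ?_ ?_ h
  · intro b hb; exact ⟨1, Or.inl hb⟩
  · rintro a b _ ha ⟨n, hn⟩; exact ⟨n + 1, Or.inr ⟨a, hn, ha⟩⟩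
  · rintro a b _ hE hne ⟨n, hn⟩; exact ⟨n, b, hn, hE, hne⟩

lemma EvenA_toN {a : α} (h : EvenA E M a) : ∃ n, EvenAN E M n a := by
  refine EvenA.rec (motive_1 := fun a _ => ∃ n, EvenAN E M n a)
    (motive_2 := fun b _ => ∃ n, ∃ a', EvenAN E M n a' ∧ E a' b ∧ M a' ≠ some b)
    ?_ ?_ ?_ h
  · intro a ha; exact ⟨1, Or.inl ha⟩
  · rintro a b _ ha ⟨n, hn⟩; exact ⟨n + 1, Or.inr ⟨b, hn, ha⟩⟩
  · rintro a b _ hE hne ⟨n, hn⟩; exact ⟨n, a, hn, hE, hne⟩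

end Fuel

section Claims
variable {α β : Type*} [DecidableEq α] {E : α → β → Prop}

/-- Transfer lemma for the `EvenB` family under the flip `a ↦ some b, x ↦ none`. -/
lemma transferB (M : α → Option β) (a x : α) (b : β)
    (ha : M a = none) (hx : M x = some b) :
    ∀ n c, EvenBN E M n c →
      EvenBN E (fun y => if y = a then some b else if y = x then none else M y) n c ∨
      EvenBN E M n b := by
  intro n
  induction n with
  | zero => intro c hc; exact hc.elim
  | succ n ih =>
    intro c hc
    by_cases hcb : c = b
    · exact Or.inr (hcb ▸ hc)
    have hxa : x ≠ a := by intro h; rw [h, ha] at hx; exact absurd hx (by simp)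
    rcases hc with h1 | ⟨z, ⟨b2, hb2, hE2, hne2⟩, hz⟩
    · left; left
      intro y
      by_cases hy : y = a
      · simp only [hy, if_pos rfl]; intro h; exact hcb (Option.some.inj h).symm
      · by_cases hyx : y = x
        · simp [hy, hyx, hxa]
        · simpa [hy, hyx] using h1 y
    · -- step
      have hza : z ≠ a := by intro h; rw [h, ha] at hz; exact absurd hz (by simp)
      have hzx : z ≠ x := by
        intro h; rw [h, hx] at hz; exact hcb (Option.some.inj hz).symm
      by_cases hb2b : b2 = b
      · exact Or.inr (EvenBN_mono (Nat.le_succ n) (hb2b ▸ hb2))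
      rcases ih b2 hb2 with h1 | h1
      · left; right
        refine ⟨z, ⟨b2, h1, hE2, ?_⟩, ?_⟩
        · simp only [if_neg hza, if_neg hzx]; exact hne2
        · simp only [if_neg hza, if_neg hzx]; exact hz
      · exact Or.inr (EvenBN_mono (Nat.le_succ n) h1)

/-- Transfer lemma for the `EvenA` family under the rematch `a : some b0 ↦ some b`
(where `b` was exposed). -/
lemma transferA (M : α → Option β) (a : α) (b b0 : β)
    (hM : IsMatching M) (ha : M a = some b0) (hb : ∀ y, M y ≠ some b) :
    ∀ n c, EvenAN E M n c →
      EvenAN E (fun y => if y = a then some b else M y) n c ∨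
      EvenAN E M n a := by
  intro n
  induction n with
  | zero => intro c hc; exact hc.elim
  | succ n ih =>
    intro c hc
    by_cases hca : c = a
    · exact Or.inr (hca ▸ hc)
    rcases hc with h1 | ⟨d, ⟨a', ha', hE', hne'⟩, hd⟩
    · left; left; simp only [if_neg hca]; exact h1
    · -- step : M c = some d
      have hb0b : b0 ≠ b := fun h => hb a (h ▸ ha)
      by_cases ha'a : a' = a
      · exact Or.inr (EvenAN_mono (Nat.le_succ n) (ha'a ▸ ha'))
      rcases ih a' ha' with h1 | h1
      · left; right
        refine ⟨d, ⟨a', h1, hE', ?_⟩, ?_⟩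
        · simp only [if_neg ha'a]; exact hne'
        · simp only [if_neg hca]; exact hd
      · exact Or.inr (EvenAN_mono (Nat.le_succ n) h1)

/-- An exposed person adjacent to an even item yields an augmentation. -/
lemma claimC : ∀ (n : ℕ) (M : α → Option β), IsMatchingOn E M → ∀ (a : α) (b : β) [Fintype α],
    M a = none → E a b → EvenBN E M n b →
    ∃ M'', IsMatchingOn E M'' ∧ msize M < msize M'' := by
  intro n
  induction n using Nat.strong_induction_on with
  | _ n ih =>
    intro M hM a b _ ha hE hb
    match n, hb with
    | n+1, hb =>
      rcases hb with h1 | ⟨x, ⟨b2, hb2, hE2, hne2⟩, hx⟩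
      · -- b exposed : augment directly
        refine ⟨fun y => if y = a then some b else M y, ⟨?_, ?_⟩, ?_⟩
        · intro y c hc
          by_cases hy : y = a
          · rw [hy]; simp only [hy, if_pos rfl] at hc
            exact (Option.some.inj hc) ▸ hE
          · simp only [if_neg hy] at hc; exact hM.1 y c hc
        · intro y y' c hy hy'
          by_cases h1' : y = a <;> by_cases h2' : y' = a
          · rw [h1', h2']
          · simp only [h1', if_pos rfl] at hy
            simp only [if_neg h2'] at hy'
            exact absurd ((Option.some.inj hy) ▸ hy') (h1 y')
          · simp only [h2', if_pos rfl] at hy'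
            simp only [if_neg h1'] at hy
            exact absurd ((Option.some.inj hy') ▸ hy) (h1 y)
          · simp only [if_neg h1'] at hy; simp only [if_neg h2'] at hy'
            exact hM.2 y y' c hy hy'
        · rw [msize_update M a b ha]; omega
      · -- b matched to x; flip
        have hxa : x ≠ a := by intro h; rw [h, ha] at hx; exact absurd hx (by simp)
        set M1 : α → Option β := fun y => if y = a then some b else if y = x then none else M y with hM1
        have hM1m : IsMatchingOn E M1 := by
          constructor
          · intro y c hc
            by_cases hy : y = a
            · rw [hy]; simp only [hM1, hy, if_pos rfl] at hc
              exact (Option.some.inj hc) ▸ hE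
            · by_cases hyx : y = x
              · simp [hM1, hy, hyx, hxa] at hc
              · simp only [hM1, if_neg hy, if_neg hyx] at hc; exact hM.1 y c hc
          · intro y y' c hy hy'
            have key : ∀ z, M1 z = some c → (z = a ∧ c = b) ∨ (z ≠ a ∧ z ≠ x ∧ M z = some c) := by
              intro z hz
              by_cases hza : z = a
              · simp only [hM1, hza, if_pos rfl] at hz
                exact Or.inl ⟨hza, (Option.some.inj hz).symm⟩
              · by_cases hzx : z = x
                · simp [hM1, hza, hzx, hxa] at hz
                · simp only [hM1, if_neg hza, if_neg hzx] at hz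
                  exact Or.inr ⟨hza, hzx, hz⟩
            rcases key y hy with ⟨hya, hcb⟩ | ⟨hya, hyx, hyM⟩ <;>
              rcases key y' hy' with ⟨hy'a, hcb'⟩ | ⟨hy'a, hy'x, hy'M⟩
            · rw [hya, hy'a]
            · exact absurd (hM.2 y' x c hy'M (hcb ▸ hx)) hy'x
            · exact absurd (hM.2 y x c hyM (hcb' ▸ hx)) hyx
            · exact hM.2 y y' c hyM hy'M
        have hsz : msize M1 = msize M := msize_swap M a x b ha hx
        rcases transferB M a x b ha hx n b2 hb2 with h1 | h1
        · have hx1 : M1 x = none := by simp [hM1, hxa]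
          obtain ⟨M'', hm'', hlt⟩ := ih n (Nat.lt_succ_self n) M1 hM1m x b2 hx1 hE2 h1
          exact ⟨M'', hm'', by omega⟩
        · exact ih n (Nat.lt_succ_self n) M hM a b ha hE h1

/-- An exposed item adjacent to an even person yields an augmentation. -/
lemma claimC' : ∀ (n : ℕ) (M : α → Option β), IsMatchingOn E M → ∀ (a : α) (b : β) [Fintype α],
    (∀ y, M y ≠ some b) → E a b → EvenAN E M n a →
    ∃ M'', IsMatchingOn E M'' ∧ msize M < msize M'' := by
  intro n
  induction n using Nat.strong_induction_on with
  | _ n ih =>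
    intro M hM a b _ hb hE ha
    match n, ha with
    | n+1, ha =>
      rcases ha with h1 | ⟨b0, ⟨a1, ha1, hE1, hne1⟩, hb0⟩
      · -- a exposed : augment directly
        refine ⟨fun y => if y = a then some b else M y, ⟨?_, ?_⟩, ?_⟩
        · intro y c hc
          by_cases hy : y = a
          · rw [hy]; simp only [hy, if_pos rfl] at hc
            exact (Option.some.inj hc) ▸ hE
          · simp only [if_neg hy] at hc; exact hM.1 y c hc
        · intro y y' c hy hy'
          by_cases h1' : y = a <;> by_cases h2' : y' = a
          · rw [h1', h2']
          · simp only [h1', if_pos rfl] at hy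
            simp only [if_neg h2'] at hy'
            exact absurd ((Option.some.inj hy) ▸ hy') (hb y')
          · simp only [h2', if_pos rfl] at hy'
            simp only [if_neg h1'] at hy
            exact absurd ((Option.some.inj hy') ▸ hy) (hb y)
          · simp only [if_neg h1'] at hy; simp only [if_neg h2'] at hy'
            exact hM.2 y y' c hy hy'
        · rw [msize_update M a b h1]; omega
      · -- a matched to b0 ; rematch a to b
        set M1 : α → Option β := fun y => if y = a then some b else M y with hM1
        have hb0b : b0 ≠ b := fun h => hb a (h ▸ hb0)
        have hM1m : IsMatchingOn E M1 := by
          constructor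
          · intro y c hc
            by_cases hy : y = a
            · rw [hy]; simp only [hM1, hy, if_pos rfl] at hc
              exact (Option.some.inj hc) ▸ hE
            · simp only [hM1, if_neg hy] at hc; exact hM.1 y c hc
          · intro y y' c hy hy'
            by_cases h1' : y = a <;> by_cases h2' : y' = a
            · rw [h1', h2']
            · simp only [hM1, h1', if_pos rfl] at hy
              simp only [hM1, if_neg h2'] at hy'
              exact absurd ((Option.some.inj hy) ▸ hy') (hb y')
            · simp only [hM1, h2', if_pos rfl] at hy'
              simp only [hM1, if_neg h1'] at hy
              exact absurd ((Option.some.inj hy') ▸ hy) (hb y)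
            · simp only [hM1, if_neg h1'] at hy; simp only [hM1, if_neg h2'] at hy'
              exact hM.2 y y' c hy hy'
        have hsz : msize M1 = msize M := by
          rw [msize_eq, msize_eq]
          congr 1
          apply Finset.filter_congr
          intro y _
          by_cases hy : y = a <;> simp [hM1, hy, hb0]
        have hb0exp : ∀ y, M1 y ≠ some b0 := by
          intro y
          by_cases hy : y = a
          · simp only [hM1, hy, if_pos rfl]
            intro h; exact hb0b (Option.some.inj h).symm
          · simp only [hM1, if_neg hy]
            intro h; exact hy (hM.2 y a b0 h hb0)
        rcases transferA M a b b0 hM.2 hb0 hb n a1 ha1 with h1 | h1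
        · obtain ⟨M'', hm'', hlt⟩ := ih n (Nat.lt_succ_self n) M1 hM1m a1 b0 hb0exp hE1 h1
          exact ⟨M'', hm'', by omega⟩
        · exact ih n (Nat.lt_succ_self n) M hM a b hb hE h1

end Claims

section Disjoint
variable {α β : Type*} [Fintype α] {E : α → β → Prop}

lemma noAugB {M : α → Option β} (hmax : IsMaxMatchingOn E M) {a : α} {b : β}
    (ha : M a = none) (hE : E a b) (hb : EvenB E M b) : False := by
  classical
  obtain ⟨n, hn⟩ := EvenB_toN hb
  obtain ⟨M'', hm'', hlt⟩ := claimC n M hmax.1 a b ha hE hn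
  exact absurd (hmax.2 M'' hm'') (by omega)

lemma noAugA {M : α → Option β} {a : α} {b : β} (hmax : IsMaxMatchingOn E M)
    (hb : ∀ y, M y ≠ some b) (hE : E a b) (ha : EvenA E M a) : False := by
  classical
  obtain ⟨n, hn⟩ := EvenA_toN ha
  obtain ⟨M'', hm'', hlt⟩ := claimC' n M hmax.1 a b hb hE hn
  exact absurd (hmax.2 M'' hm'') (by omega)

lemma evenA_not_oddA {M : α → Option β} (hmax : IsMaxMatchingOn E M) {a : α}
    (h : EvenA E M a) : ¬ OddA E M a := by
  refine EvenA.rec (motive_1 := fun a _ => ¬ OddA E M a)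
    (motive_2 := fun b _ => ¬ EvenB E M b) ?_ ?_ ?_ h
  · intro a ha hodd
    cases hodd with
    | step _ b hB hE hne => exact noAugB hmax ha hE hB
  · intro a b hOddB haM ih hodd
    exact ih (EvenB.step a b hodd haM)
  · intro a b _ hE hne ih hevenB
    exact ih (OddA.step a b hevenB hE hne)

lemma evenB_not_oddB {M : α → Option β} (hmax : IsMaxMatchingOn E M) {b : β}
    (h : EvenB E M b) : ¬ OddB E M b := by
  refine EvenB.rec (motive_1 := fun b _ => ¬ OddB E M b)
    (motive_2 := fun a _ => ¬ EvenA E M a) ?_ ?_ ?_ h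
  · intro b hb hodd
    cases hodd with
    | step a _ hA hE hne => exact noAugA hmax hb hE hA
  · intro a b hOddA haM ih hodd
    exact ih (EvenA.step a b hodd haM)
  · intro a b _ hE hne ih hevenA
    exact ih (OddB.step a b hevenA hE hne)

end Disjoint

section Walk
variable {α β : Type*} [Fintype α] [DecidableEq α] {E : α → β → Prop}

/-- Walk argument: a person exposed by a maximum matching `M` is even w.r.t. any matching `M0`. -/
lemma exposed_evenA (M0 M : α → Option β) (hM0 : IsMatchingOn E M0)
    (hM : IsMaxMatchingOn E M) (a0 : α) (h0 : M a0 = none) : EvenA E M0 a0 := by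
  classical
  suffices H : ∀ (n : ℕ) (S : Finset α) (x : α), x ∈ S → (Finset.univ \ S).card = n →
      (EvenA E M0 x → EvenA E M0 a0) → (OddA E M x → False) →
      (∀ c, M x = some c → M0 x ≠ some c) →
      (∀ z ∈ S, ∀ c, M z = some c → ∃ y ∈ S, y ≠ x ∧ M0 y = some c) →
      EvenA E M0 a0 by
    refine H (Finset.univ \ {a0}).card {a0} a0 (Finset.mem_singleton_self a0) rfl id ?_ ?_ ?_
    · intro hodd
      cases hodd with
      | step _ b hB hE hne => exact noAugB hM h0 hE hB
    · intro c hc; rw [h0] at hc; exact absurd hc (by simp)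
    · intro z hz c hc
      rw [Finset.mem_singleton] at hz
      rw [hz, h0] at hc; exact absurd hc (by simp)
  intro n
  induction n using Nat.strong_induction_on with
  | _ n ih =>
    intro S x hxS hcard K1 K2 INVx IT
    cases hM0x : M0 x with
    | none => exact K1 (EvenA.base x hM0x)
    | some b =>
      by_cases hpart : ∃ z, M z = some b
      · obtain ⟨a', hMa'⟩ := hpart
        have hE' : E a' b := hM.1.1 a' b hMa'
        have ha'x : a' ≠ x := by
          intro h; rw [h] at hMa'; exact INVx b hMa' hM0x
        have hM0a' : M0 a' ≠ some b := by
          intro h; exact ha'x (hM0.2 a' x b h hM0x)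
        have ha'S : a' ∉ S := by
          intro hmem
          obtain ⟨y, hyS, hyx, hy0⟩ := IT a' hmem b hMa'
          exact hyx (hM0.2 y x b hy0 hM0x)
        have ha'univ : a' ∈ Finset.univ \ S := by simp [ha'S]
        have hcard' : (Finset.univ \ insert a' S).card < n := by
          rw [← hcard]
          apply Finset.card_lt_card
          rw [Finset.ssubset_iff_of_subset
            (Finset.sdiff_subset_sdiff (Finset.Subset.refl _) (Finset.subset_insert a' S))]
          exact ⟨a', ha'univ, by simp⟩
        refine ih _ hcard' (insert a' S) a' (Finset.mem_insert_self a' S) rfl ?_ ?_ ?_ ?_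
        · -- K1'
          intro h
          exact K1 (EvenA.step x b (OddB.step a' b h hE' hM0a') hM0x)
        · -- K2'
          intro h
          exact K2 (OddA.step x b (EvenB.step a' b h hMa') (hM0.1 x b hM0x)
            (fun h' => INVx b h' hM0x))
        · -- INV'
          intro c hc
          rw [hMa'] at hc
          rw [← Option.some.inj hc]
          exact hM0a'
        · -- IT'
          intro z hz c hc
          rcases Finset.mem_insert.mp hz with hz | hz
          · rw [hz, hMa'] at hc
            rw [← Option.some.inj hc]
            exact ⟨x, Finset.mem_insert_of_mem hxS, Ne.symm ha'x, hM0x⟩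
          · obtain ⟨y, hyS, hyx, hy0⟩ := IT z hz c hc
            refine ⟨y, Finset.mem_insert_of_mem hyS, ?_, hy0⟩
            intro h; rw [h] at hyS; exact ha'S hyS
      · push_neg at hpart
        have hBb : EvenB E M b := EvenB.base b hpart
        exact absurd (OddA.step x b hBb (hM0.1 x b hM0x) (fun h' => INVx b h' hM0x)) K2

/-- Walk argument: an item exposed by a maximum matching `M` is even w.r.t. any matching `M0`. -/
lemma exposed_evenB (M0 M : α → Option β) (hM0 : IsMatchingOn E M0)
    (hM : IsMaxMatchingOn E M) (b0 : β) (h0 : ∀ x, M x ≠ some b0) : EvenB E M0 b0 := by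
  classical
  suffices H : ∀ (n : ℕ) (S : Finset α) (T : Finset β) (d : β), d ∈ T →
      (Finset.univ \ S).card = n →
      (EvenB E M0 d → EvenB E M0 b0) → EvenB E M d →
      (∀ x, M0 x = some d → M x ≠ some d) →
      (∀ y ∈ S, ∀ c, M0 y = some c → c ∈ T ∧ c ≠ d) →
      (∀ c ∈ T, ∀ y, M y = some c → ∃ d' ∈ T, d' ≠ d ∧ M0 y = some d') →
      EvenB E M0 b0 by
    refine H (Finset.univ \ (∅ : Finset α)).card ∅ {b0} b0 (Finset.mem_singleton_self b0)
      rfl id (EvenB.base b0 h0) (fun x _ => h0 x) (by simp) ?_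
    intro c hc y hy
    rw [Finset.mem_singleton] at hc
    rw [hc] at hy
    exact absurd hy (h0 y)
  intro n
  induction n using Nat.strong_induction_on with
  | _ n ih =>
    intro S T d hdT hcard K1 K2 INVd IS IT
    by_cases hpart : ∃ x, M0 x = some d
    · obtain ⟨x, hx⟩ := hpart
      have hEx : E x d := hM0.1 x d hx
      cases hMx : M x with
      | none => exact absurd (noAugB hM hMx hEx K2) id
      | some b' =>
        have hb'd : b' ≠ d := by
          intro h; rw [h] at hMx; exact INVd x hx hMx
        have hEx' : E x b' := hM.1.1 x b' hMx
        have hxS : x ∉ S := by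
          intro hmem
          exact (IS x hmem d hx).2 rfl
        have hb'T : b' ∉ T := by
          intro hmem
          obtain ⟨d', hd'T, hd'd, hd'0⟩ := IT b' hmem x hMx
          rw [hx] at hd'0
          exact hd'd (Option.some.inj hd'0).symm
        have hxuniv : x ∈ Finset.univ \ S := by simp [hxS]
        have hcard' : (Finset.univ \ insert x S).card < n := by
          rw [← hcard]
          apply Finset.card_lt_card
          rw [Finset.ssubset_iff_of_subset
            (Finset.sdiff_subset_sdiff (Finset.Subset.refl _) (Finset.subset_insert x S))]
          exact ⟨x, hxuniv, by simp⟩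
        refine ih _ hcard' (insert x S) (insert b' T) b' (Finset.mem_insert_self b' T)
          rfl ?_ ?_ ?_ ?_ ?_
        · -- K1'
          intro h
          refine K1 (EvenB.step x d (OddA.step x b' h hEx' ?_) hx)
          rw [hx]; intro h'; exact hb'd (Option.some.inj h').symm
        · -- K2'
          refine EvenB.step x b' (OddA.step x d K2 hEx (INVd x hx)) hMx
        · -- INVd'
          intro y hy0 hyM
          have : y = x := hM.1.2 y x b' hyM hMx
          rw [this, hx] at hy0
          exact hb'd (Option.some.inj hy0).symm
        · -- IS'
          intro y hy c hc
          rcases Finset.mem_insert.mp hy with hy | hy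
          · rw [hy, hx] at hc
            have : c = d := (Option.some.inj hc).symm
            exact ⟨this ▸ Finset.mem_insert_of_mem hdT, by rw [this]; exact fun h => hb'T (h ▸ hdT)⟩
          · obtain ⟨hcT, hcd⟩ := IS y hy c hc
            exact ⟨Finset.mem_insert_of_mem hcT, fun h => hb'T (h ▸ hcT)⟩
        · -- IT'
          intro c hc y hy
          rcases Finset.mem_insert.mp hc with hc | hc
          · rw [hc] at hy
            have : y = x := hM.1.2 y x b' hy hMx
            rw [this]
            exact ⟨d, Finset.mem_insert_of_mem hdT, fun h => hb'T (h ▸ hdT), hx⟩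
          · obtain ⟨d', hd'T, hd'd, hd'0⟩ := IT c hc y hy
            exact ⟨d', Finset.mem_insert_of_mem hd'T, fun h => hb'T (h ▸ hd'T), hd'0⟩
    · push_neg at hpart
      exact K1 (EvenB.base d hpart)

end Walk

/-- Every odd or unreachable (i.e. critical) vertex of the Gallai–Edmonds decomposition
(taken with respect to a maximum matching `M0`) is matched in every maximum cardinality
matching of the bipartite graph `E`. -/
theorem critical_vertices_always_matched {α β : Type*} [Fintype α]
    (E : α → β → Prop) (M0 : α → Option β) (hM0 : IsMaxMatchingOn E M0)
    (M : α → Option β) (hM : IsMaxMatchingOn E M) :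
    (∀ a, OddA E M0 a ∨ UnreachA E M0 a → (M a).isSome) ∧
    (∀ b, OddB E M0 b ∨ UnreachB E M0 b → ∃ a, M a = some b) := by
  classical
  constructor
  · intro a h
    by_contra hnone
    rw [Option.not_isSome_iff_eq_none] at hnone
    have hEven : EvenA E M0 a := exposed_evenA M0 M hM0.1 hM a hnone
    rcases h with hodd | hun
    · exact evenA_not_oddA hM0 hEven hodd
    · exact hun.1 hEven
  · intro b h
    by_contra hnone
    push_neg at hnone
    have hEven : EvenB E M0 b := exposed_evenB M0 M hM0.1 hM b hnone
    rcases h with hodd | hun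
    · exact evenB_not_oddB hM0 hEven hodd
    · exact hun.1 hEven
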